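/- Let f : ℤ² → V, let r ∈ ℤ², let K ∈ ℕ, and suppose (∂₁^m ∂₂^n f)(r) = 0 for all integers m, n ≥ 0 with m + n > K. If p is a V-valued polynomial function of total degree at most K such that p(r + i e₁ + j e₂) = f(r + i e₁ + j e₂) for all integers i, j ≥ 0 with i + j ≤ K, then f(s) = p(s) for every s ∈ ℤ² with s₁ ≥ r₁ and s₂ ≥ r₂. -/
import Mathlib

open Function Polynomial

/-- Difference derivative in direction `e₁` for functions on `ℤ²`. -/
def ddx {V : Type*} [AddCommGroup V] (f : ℤ × ℤ → V) : ℤ × ℤ → V :=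
  fun s => f (s.1 + 1, s.2) - f s

/-- Difference derivative in direction `e₂` for functions on `ℤ²`. -/
def ddy {V : Type*} [AddCommGroup V] (f : ℤ × ℤ → V) : ℤ × ℤ → V :=
  fun s => f (s.1, s.2 + 1) - f s

/-- One-dimensional forward difference on ℤ-valued functions. -/
def d1 (c : ℤ → ℤ) : ℤ → ℤ := fun x => c (x + 1) - c x

def IsPolyLe (k : ℕ) (c : ℤ → ℤ) : Prop :=
  ∃ q : ℤ[X], q.natDegree ≤ k ∧ ∀ x, c x = q.eval x

lemma d1_isPolyLe {k : ℕ} {c : ℤ → ℤ} (h : IsPolyLe (k + 1) c) : IsPolyLe k (d1 c) := by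
  obtain ⟨q, hq, he⟩ := h
  refine ⟨q.comp (X + 1) - q, ?_, fun x => by simp [d1, he, eval_comp]⟩
  by_cases h0 : q.natDegree = 0
  · obtain ⟨a, rfl⟩ := natDegree_eq_zero.mp h0
    simp
  · have hqne : q ≠ 0 := fun h => h0 (by simp [h])
    have hlc : (q.comp (X + 1)).leadingCoeff = q.leadingCoeff := by
      have hX1 : (X + 1 : ℤ[X]).natDegree = 1 := by
        rw [← C_1, natDegree_X_add_C]
      rw [leadingCoeff_comp (by rw [hX1]; exact one_ne_zero)]
      have : (X + 1 : ℤ[X]).leadingCoeff = 1 := by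
        simpa using (monic_X_add_C (1 : ℤ)).leadingCoeff
      simp [this]
    have hcne : q.comp (X + 1) ≠ 0 := by
      intro h
      apply hqne
      have := hlc
      rw [h] at this
      simp at this
      exact leadingCoeff_eq_zero.mp this.symm
    have hdeg : (q.comp (X + 1)).degree = q.degree := by
      have hX1 : (X + 1 : ℤ[X]).natDegree = 1 := by
        rw [← C_1, natDegree_X_add_C]
      rw [degree_eq_natDegree hcne, degree_eq_natDegree hqne, natDegree_comp, hX1, mul_one]
    by_cases hd : q.comp (X + 1) - q = 0
    · simp [hd]
    · have hlt : (q.comp (X + 1) - q).degree < q.degree :=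
        hdeg ▸ degree_sub_lt hdeg hcne hlc
      have : (q.comp (X + 1) - q).degree < (k + 1 : ℕ) :=
        lt_of_lt_of_le hlt (le_trans degree_le_natDegree (by exact_mod_cast hq))
      have := (natDegree_lt_iff_degree_lt hd).mpr this
      omega

lemma d1_iter_eq_zero : ∀ (k : ℕ) (c : ℤ → ℤ), IsPolyLe k c → d1^[k + 1] c = 0 := by
  intro k
  induction k with
  | zero =>
    intro c ⟨q, hq, he⟩
    obtain ⟨a, rfl⟩ := natDegree_eq_zero.mp (Nat.le_zero.mp hq)
    funext x
    simp [d1, he]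
  | succ k ih =>
    intro c hc
    rw [Function.iterate_succ_apply]
    exact ih (d1 c) (d1_isPolyLe hc)

lemma d1_iter_pow_eq_zero {k m : ℕ} (h : k < m) : d1^[m] (fun x : ℤ => x ^ k) = 0 := by
  have hm : m = (m - (k + 1)) + (k + 1) := by omega
  rw [hm, Function.iterate_add_apply,
    d1_iter_eq_zero k _ ⟨X ^ k, by simp, by simp⟩]
  exact Function.iterate_fixed (by funext x; simp [d1]) _

section TwoDim

variable {V : Type*} [AddCommGroup V]

lemma ddx_ddy_comm (f : ℤ × ℤ → V) : ddx (ddy f) = ddy (ddx f) := by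
  funext s; simp only [ddx, ddy]; abel

lemma ddy_iter_ddx (n : ℕ) (f : ℤ × ℤ → V) : ddy^[n] (ddx f) = ddx (ddy^[n] f) := by
  induction n generalizing f with
  | zero => rfl
  | succ n ih =>
    rw [Function.iterate_succ_apply, ← ddx_ddy_comm, ih, ← Function.iterate_succ_apply]

lemma ddx_sub (f g : ℤ × ℤ → V) :
    ddx (fun s => f s - g s) = fun s => ddx f s - ddx g s := by
  funext s; simp only [ddx]; abel

lemma ddy_sub (f g : ℤ × ℤ → V) :
    ddy (fun s => f s - g s) = fun s => ddy f s - ddy g s := by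
  funext s; simp only [ddy]; abel

lemma ddx_iter_sub (m : ℕ) (f g : ℤ × ℤ → V) :
    ddx^[m] (fun s => f s - g s) = fun s => ddx^[m] f s - ddx^[m] g s := by
  induction m generalizing f g with
  | zero => rfl
  | succ m ih =>
    rw [Function.iterate_succ_apply, ddx_sub, ih]
    simp [Function.iterate_succ_apply]

lemma ddy_iter_sub (n : ℕ) (f g : ℤ × ℤ → V) :
    ddy^[n] (fun s => f s - g s) = fun s => ddy^[n] f s - ddy^[n] g s := by
  induction n generalizing f g with
  | zero => rfl
  | succ n ih =>
    rw [Function.iterate_succ_apply, ddy_sub, ih]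
    simp [Function.iterate_succ_apply]

lemma ddx_sum {ι : Type*} (t : Finset ι) (F : ι → ℤ × ℤ → V) :
    ddx (fun s => ∑ k ∈ t, F k s) = fun s => ∑ k ∈ t, ddx (F k) s := by
  funext s; simp [ddx, Finset.sum_sub_distrib]

lemma ddy_sum {ι : Type*} (t : Finset ι) (F : ι → ℤ × ℤ → V) :
    ddy (fun s => ∑ k ∈ t, F k s) = fun s => ∑ k ∈ t, ddy (F k) s := by
  funext s; simp [ddy, Finset.sum_sub_distrib]

lemma ddx_iter_sum {ι : Type*} (m : ℕ) (t : Finset ι) (F : ι → ℤ × ℤ → V) :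
    ddx^[m] (fun s => ∑ k ∈ t, F k s) = fun s => ∑ k ∈ t, ddx^[m] (F k) s := by
  induction m generalizing F with
  | zero => rfl
  | succ m ih =>
    rw [Function.iterate_succ_apply, ddx_sum, ih]
    simp [Function.iterate_succ_apply]

lemma ddy_iter_sum {ι : Type*} (n : ℕ) (t : Finset ι) (F : ι → ℤ × ℤ → V) :
    ddy^[n] (fun s => ∑ k ∈ t, F k s) = fun s => ∑ k ∈ t, ddy^[n] (F k) s := by
  induction n generalizing F with
  | zero => rfl
  | succ n ih =>
    rw [Function.iterate_succ_apply, ddy_sum, ih]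
    simp [Function.iterate_succ_apply]

lemma ddy_iter_mon (n : ℕ) (a b : ℤ → ℤ) (w : V) :
    ddy^[n] (fun s : ℤ × ℤ => (a s.1 * b s.2) • w)
      = fun s => (a s.1 * d1^[n] b s.2) • w := by
  induction n generalizing b with
  | zero => rfl
  | succ n ih =>
    rw [Function.iterate_succ_apply]
    have h1 : ddy (fun s : ℤ × ℤ => (a s.1 * b s.2) • w)
        = fun s : ℤ × ℤ => (a s.1 * d1 b s.2) • w := by
      funext s
      simp only [ddy, d1]
      rw [← sub_smul, mul_sub]
    rw [h1, ih (d1 b)]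
    simp [Function.iterate_succ_apply]

lemma ddx_iter_mon (m : ℕ) (a b : ℤ → ℤ) (w : V) :
    ddx^[m] (fun s : ℤ × ℤ => (a s.1 * b s.2) • w)
      = fun s => (d1^[m] a s.1 * b s.2) • w := by
  induction m generalizing a with
  | zero => rfl
  | succ m ih =>
    rw [Function.iterate_succ_apply]
    have h1 : ddx (fun s : ℤ × ℤ => (a s.1 * b s.2) • w)
        = fun s : ℤ × ℤ => (d1 a s.1 * b s.2) • w := by
      funext s
      simp only [ddx, d1]
      rw [← sub_smul, sub_mul]
    rw [h1, ih (d1 a)]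
    simp [Function.iterate_succ_apply]

lemma mon_diff_zero {K : ℕ} {k : ℕ × ℕ} (hk : k.1 + k.2 ≤ K) {m n : ℕ} (hmn : K < m + n)
    (w : V) (s : ℤ × ℤ) :
    ddx^[m] (ddy^[n] (fun s : ℤ × ℤ => (s.1 ^ k.1 * s.2 ^ k.2) • w)) s = 0 := by
  rw [ddy_iter_mon n (fun x => x ^ k.1) (fun x => x ^ k.2) w,
    ddx_iter_mon m (fun x => x ^ k.1) _ w]
  rcases (by omega : k.1 < m ∨ k.2 < n) with h | h
  · rw [d1_iter_pow_eq_zero h]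
    simp
  · rw [d1_iter_pow_eq_zero h]
    simp

end TwoDim

theorem stmt_5 {V : Type*} [AddCommGroup V] [Module ℂ V]
    (f : ℤ × ℤ → V) (r : ℤ × ℤ) (K : ℕ)
    (hf : ∀ m n : ℕ, K < m + n → (ddx^[m] (ddy^[n] f)) r = 0)
    (v : ℕ × ℕ → V) (p : ℤ × ℤ → V)
    (hp : ∀ s : ℤ × ℤ, p s =
      ∑ k ∈ Finset.filter (fun k : ℕ × ℕ => k.1 + k.2 ≤ K)
          (Finset.range (K + 1) ×ˢ Finset.range (K + 1)),
        (s.1 ^ k.1 * s.2 ^ k.2) • v k)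
    (hagree : ∀ i j : ℕ, i + j ≤ K → p (r.1 + i, r.2 + j) = f (r.1 + i, r.2 + j)) :
    ∀ s : ℤ × ℤ, r.1 ≤ s.1 → r.2 ≤ s.2 → f s = p s := by
  classical
  set T := Finset.filter (fun k : ℕ × ℕ => k.1 + k.2 ≤ K)
      (Finset.range (K + 1) ×ˢ Finset.range (K + 1)) with hT
  -- p's high-order differences vanish everywhere
  have hpfun : p = fun s => ∑ k ∈ T, (s.1 ^ k.1 * s.2 ^ k.2) • v k := funext hp
  have hpdiff : ∀ m n : ℕ, K < m + n → ∀ s, ddx^[m] (ddy^[n] p) s = 0 := by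
    intro m n hmn s
    rw [hpfun, ddy_iter_sum n T (fun k => fun s : ℤ × ℤ => (s.1 ^ k.1 * s.2 ^ k.2) • v k),
      ddx_iter_sum m T _]
    apply Finset.sum_eq_zero
    intro k hk
    have hk' : k.1 + k.2 ≤ K := (Finset.mem_filter.mp hk).2
    exact mon_diff_zero hk' hmn (v k) s
  set g : ℤ × ℤ → V := fun s => f s - p s with hg
  have hgdiff : ∀ m n : ℕ, ddx^[m] (ddy^[n] g) = fun s => ddx^[m] (ddy^[n] f) s - ddx^[m] (ddy^[n] p) s := by
    intro m n
    rw [hg, ddy_iter_sub, ddx_iter_sub]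
  -- triangle vanishing
  have tri_y : ∀ n i j : ℕ, n + i + j ≤ K → ddy^[n] g (r.1 + i, r.2 + j) = 0 := by
    intro n
    induction n with
    | zero =>
      intro i j hij
      simp only [Function.iterate_zero, id_eq, hg]
      rw [hagree i j (by omega)]
      simp
    | succ n ih =>
      intro i j hij
      rw [Function.iterate_succ_apply']
      have h1 : ddy^[n] g (r.1 + i, r.2 + j + 1) = 0 := by
        have := ih i (j + 1) (by omega)
        push_cast at this ⊢
        convert this using 2
        ring
      have h2 : ddy^[n] g (r.1 + i, r.2 + j) = 0 := ih i j (by omega)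
      simp only [ddy]
      rw [h1, h2, sub_zero]
  have tri : ∀ m n i j : ℕ, m + n + i + j ≤ K → ddx^[m] (ddy^[n] g) (r.1 + i, r.2 + j) = 0 := by
    intro m
    induction m with
    | zero => intro n i j h; exact tri_y n i j (by omega)
    | succ m ih =>
      intro n i j h
      rw [Function.iterate_succ_apply']
      have h1 : ddx^[m] (ddy^[n] g) (r.1 + i + 1, r.2 + j) = 0 := by
        have := ih n (i + 1) j (by omega)
        push_cast at this ⊢
        convert this using 2
        ring
      have h2 : ddx^[m] (ddy^[n] g) (r.1 + i, r.2 + j) = 0 := ih n i j (by omega)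
      simp only [ddx]
      rw [h1, h2, sub_zero]
  -- all differences of g vanish at r
  have Qg : ∀ m n : ℕ, ddx^[m] (ddy^[n] g) r = 0 := by
    intro m n
    by_cases h : m + n ≤ K
    · have := tri m n 0 0 (by omega)
      simpa using this
    · rw [hgdiff m n]
      simp only
      rw [hf m n (by omega), hpdiff m n (by omega) r, sub_zero]
  -- propagate to the whole quadrant
  have Qx : ∀ h : ℤ × ℤ → V, (∀ m n : ℕ, ddx^[m] (ddy^[n] h) r = 0) →
      (∀ m n : ℕ, ddx^[m] (ddy^[n] (ddx h)) r = 0) := by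
    intro h hQ m n
    rw [ddy_iter_ddx]
    have e : ddx^[m] (ddx (ddy^[n] h)) = ddx^[m + 1] (ddy^[n] h) :=
      (Function.iterate_succ_apply ddx m (ddy^[n] h)).symm
    rw [e]
    exact hQ (m + 1) n
  have Qy : ∀ h : ℤ × ℤ → V, (∀ m n : ℕ, ddx^[m] (ddy^[n] h) r = 0) →
      (∀ m n : ℕ, ddx^[m] (ddy^[n] (ddy h)) r = 0) := by
    intro h hQ m n
    rw [← Function.iterate_succ_apply]
    exact hQ m (n + 1)
  have quad : ∀ a b : ℕ, ∀ h : ℤ × ℤ → V, (∀ m n : ℕ, ddx^[m] (ddy^[n] h) r = 0) →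
      h (r.1 + a, r.2 + b) = 0 := by
    intro a
    induction a with
    | zero =>
      intro b
      induction b with
      | zero =>
        intro h hQ
        have := hQ 0 0
        simpa using this
      | succ b ihb =>
        intro h hQ
        have h1 : ddy h (r.1 + (0 : ℕ), r.2 + b) = 0 := ihb (ddy h) (Qy h hQ)
        have h2 : h (r.1 + (0 : ℕ), r.2 + b) = 0 := ihb h hQ
        have h3 : ddy h (r.1 + (0 : ℕ), r.2 + b)
            = h (r.1 + (0 : ℕ), r.2 + b + 1) - h (r.1 + (0 : ℕ), r.2 + b) := rfl
        have : h (r.1 + (0 : ℕ), r.2 + b + 1) = 0 := by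
          rw [h3, h2, sub_zero] at h1; exact h1
        push_cast at this ⊢
        convert this using 2
        ring
    | succ a iha =>
      intro b h hQ
      have h1 : ddx h (r.1 + a, r.2 + b) = 0 := iha b (ddx h) (Qx h hQ)
      have h2 : h (r.1 + a, r.2 + b) = 0 := iha b h hQ
      have h3 : ddx h (r.1 + a, r.2 + b)
          = h (r.1 + a + 1, r.2 + b) - h (r.1 + a, r.2 + b) := rfl
      have : h (r.1 + a + 1, r.2 + b) = 0 := by
        rw [h3, h2, sub_zero] at h1; exact h1
      push_cast at this ⊢
      convert this using 2
      ring
  intro s hs1 hs2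
  have hga : g s = 0 := by
    have ha : s.1 = r.1 + ((s.1 - r.1).toNat : ℤ) := by
      rw [Int.toNat_of_nonneg (by omega)]; ring
    have hb : s.2 = r.2 + ((s.2 - r.2).toNat : ℤ) := by
      rw [Int.toNat_of_nonneg (by omega)]; ring
    have := quad (s.1 - r.1).toNat (s.2 - r.2).toNat g Qg
    rwa [← ha, ← hb, Prod.mk.eta] at this
  have : f s - p s = 0 := hga
  exact sub_eq_zero.mp this
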